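/- Let E ⊆ ℝ^d be an m-dimensional linear subspace with 1 ≤ m ≤ d−1. For all t > 0 and 0 < θ < 1/2, the Lebesgue measure of the set {x ∈ ℝ^d : t/2 ≤ |x| ≤ t and θ/2 ≤ |proj_E(x/|x|)| ≤ θ} is at most C_d · θ^m · t^d for some constant C_d depending only on d. -/

import Mathlib

open MeasureTheory EuclideanSpace Metric Set
open scoped RealInnerProductSpace

/-- For every dimension `d` there is a constant `C > 0` such that for every `m`-dimensional
subspace `E ⊆ ℝ^d` with `1 ≤ m ≤ d-1`, all `t > 0` and `0 < θ < 1/2`, the Lebesgue measure of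
`{x : t/2 ≤ |x| ≤ t, θ/2 ≤ |proj_E (x/|x|)| ≤ θ}` is at most `C θ^m t^d`. -/
theorem stmt_3 (d : ℕ) :
    ∃ C > (0 : ℝ), ∀ (E : Submodule ℝ (EuclideanSpace ℝ (Fin d))) (m : ℕ),
      Module.finrank ℝ E = m → 1 ≤ m → m ≤ d - 1 →
      ∀ (t θ : ℝ), 0 < t → 0 < θ → θ < 1 / 2 →
        volume {x : EuclideanSpace ℝ (Fin d) |
            t / 2 ≤ ‖x‖ ∧ ‖x‖ ≤ t ∧
            θ / 2 ≤ ‖(E.orthogonalProjection (‖x‖⁻¹ • x) : EuclideanSpace ℝ (Fin d))‖ ∧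
            ‖(E.orthogonalProjection (‖x‖⁻¹ • x) : EuclideanSpace ℝ (Fin d))‖ ≤ θ} ≤
          ENNReal.ofReal (C * θ ^ m * t ^ d) := by
  classical
  refine ⟨2 ^ d, by positivity, ?_⟩
  intro E m hEm hm1 hmd t θ ht hθ hθ2
  set k := d - m with hkdef
  have hdim : Module.finrank ℝ (EuclideanSpace ℝ (Fin d)) = d := finrank_euclideanSpace_fin
  have hk : Module.finrank ℝ Eᗮ = k := by
    have h := Submodule.finrank_add_finrank_orthogonal (K := E)
    rw [hEm, hdim] at h
    omega
  have hmk : m + k = d := by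
    have := Submodule.finrank_le E
    rw [hEm, hdim] at this
    omega
  -- orthonormal bases of E and Eᗮ
  let b : OrthonormalBasis (Fin m) ℝ E := (stdOrthonormalBasis ℝ E).reindex (finCongr hEm)
  let c : OrthonormalBasis (Fin k) ℝ (Eᗮ : Submodule ℝ (EuclideanSpace ℝ (Fin d))) :=
    (stdOrthonormalBasis ℝ Eᗮ).reindex (finCongr hk)
  let v : Fin m ⊕ Fin k → EuclideanSpace ℝ (Fin d) :=
    Sum.elim (fun i => (b i : EuclideanSpace ℝ (Fin d))) (fun j => (c j : EuclideanSpace ℝ (Fin d)))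
  have hon : Orthonormal ℝ v := by
    rw [orthonormal_iff_ite]
    rintro (i | i) (j | j)
    · have := orthonormal_iff_ite.mp b.orthonormal i j
      simpa [v, Submodule.coe_inner] using this
    · simp only [v, Sum.elim_inl, Sum.elim_inr]
      rw [Submodule.inner_right_of_mem_orthogonal (b i).2 (c j).2]
      simp
    · simp only [v, Sum.elim_inl, Sum.elim_inr]
      rw [inner_eq_zero_symm.mpr (Submodule.inner_right_of_mem_orthogonal (b j).2 (c i).2)]
      simp
    · have := orthonormal_iff_ite.mp c.orthonormal i j
      simpa [v, Submodule.coe_inner] using this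
  have hsp : ⊤ ≤ Submodule.span ℝ (Set.range v) := by
    rw [Sum.elim_range, Submodule.span_union]
    have h1 : Submodule.span ℝ (Set.range fun i => (b i : EuclideanSpace ℝ (Fin d))) = E := by
      have : (Set.range fun i => (b i : EuclideanSpace ℝ (Fin d)))
          = E.subtype '' Set.range b := by
        rw [← Set.range_comp]; rfl
      have hb : Submodule.span ℝ (Set.range ⇑b) = ⊤ := by
        rw [← b.coe_toBasis]; exact b.toBasis.span_eq
      rw [this, ← Submodule.map_span, hb]
      simp
    have h2 : Submodule.span ℝ (Set.range fun j => (c j : EuclideanSpace ℝ (Fin d))) = Eᗮ := by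
      have : (Set.range fun j => (c j : EuclideanSpace ℝ (Fin d)))
          = Eᗮ.subtype '' Set.range c := by
        rw [← Set.range_comp]; rfl
      have hc : Submodule.span ℝ (Set.range ⇑c) = ⊤ := by
        rw [← c.coe_toBasis]; exact c.toBasis.span_eq
      rw [this, ← Submodule.map_span, hc]
      simp
    rw [h1, h2, Submodule.sup_orthogonal_of_hasOrthogonalProjection]
  let B : OrthonormalBasis (Fin m ⊕ Fin k) ℝ (EuclideanSpace ℝ (Fin d)) :=
    OrthonormalBasis.mk hon hsp
  -- the box
  let r : Fin m ⊕ Fin k → ℝ := Sum.elim (fun _ => t * θ) (fun _ => t)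
  let T : Set (EuclideanSpace ℝ (Fin m ⊕ Fin k)) :=
    (WithLp.ofLp : EuclideanSpace ℝ (Fin m ⊕ Fin k) → _) ⁻¹' Set.univ.pi fun i => Icc (-(r i)) (r i)
  have hTmeas : MeasurableSet T :=
    (MeasurableSet.univ_pi fun i => measurableSet_Icc).preimage (WithLp.measurable_ofLp 2 _)
  -- the set is contained in the preimage of the box
  have hsub : {x : EuclideanSpace ℝ (Fin d) |
      t / 2 ≤ ‖x‖ ∧ ‖x‖ ≤ t ∧
      θ / 2 ≤ ‖(E.orthogonalProjection (‖x‖⁻¹ • x) : EuclideanSpace ℝ (Fin d))‖ ∧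
      ‖(E.orthogonalProjection (‖x‖⁻¹ • x) : EuclideanSpace ℝ (Fin d))‖ ≤ θ}
      ⊆ B.repr ⁻¹' T := by
    rintro x ⟨h1, h2, _h3, h4⟩
    have hx : 0 < ‖x‖ := lt_of_lt_of_le (by linarith) h1
    have hP : ‖(E.orthogonalProjection x : EuclideanSpace ℝ (Fin d))‖ ≤ t * θ := by
      have e1 : (E.orthogonalProjection (‖x‖⁻¹ • x) : EuclideanSpace ℝ (Fin d))
          = ‖x‖⁻¹ • (E.orthogonalProjection x : EuclideanSpace ℝ (Fin d)) := by
        have := map_smul (E.orthogonalProjection) (‖x‖⁻¹) x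
        rw [this]; rfl
      rw [e1, norm_smul, norm_inv, norm_norm] at h4
      have := (inv_mul_le_iff₀ hx).mp h4
      calc ‖(E.orthogonalProjection x : EuclideanSpace ℝ (Fin d))‖ ≤ ‖x‖ * θ := this
        _ ≤ t * θ := by nlinarith
    intro i _
    have hrepr : B.repr x i = ⟪v i, x⟫ := by
      rw [show B.repr x i = ⟪B i, x⟫ from (B.repr_apply_apply x i)]
      congr 1
      simp [B, OrthonormalBasis.coe_mk]
    rw [Set.mem_Icc, ← abs_le, hrepr]
    cases i with
    | inl i =>
      have heq : ⟪v (Sum.inl i), x⟫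
          = ⟪(E.orthogonalProjection x : EuclideanSpace ℝ (Fin d)), (b i : EuclideanSpace ℝ (Fin d))⟫ := by
        rw [real_inner_comm]
        have := Submodule.inner_orthogonalProjectionOnto_eq_of_mem_right (K := E) (b i) x
        rw [Submodule.coe_inner] at this
        simpa [v] using this.symm
      rw [heq]
      calc |⟪(E.orthogonalProjection x : EuclideanSpace ℝ (Fin d)), (b i : EuclideanSpace ℝ (Fin d))⟫|
          ≤ ‖(E.orthogonalProjection x : EuclideanSpace ℝ (Fin d))‖ * ‖(b i : EuclideanSpace ℝ (Fin d))‖ :=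
            abs_real_inner_le_norm _ _
        _ ≤ t * θ := by
            have hb1 : ‖(b i : EuclideanSpace ℝ (Fin d))‖ = 1 := by
              exact b.orthonormal.1 i
            rw [hb1, mul_one]; exact hP
    | inr j =>
      calc |⟪v (Sum.inr j), x⟫| ≤ ‖v (Sum.inr j)‖ * ‖x‖ := abs_real_inner_le_norm _ _
        _ ≤ t := by
            have hc1 : ‖v (Sum.inr j)‖ = 1 := hon.1 (Sum.inr j)
            rw [hc1, one_mul]; exact h2
  -- volume computation
  have hvolT : volume T = ENNReal.ofReal ((2 : ℝ) ^ d * θ ^ m * t ^ d) := by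
    have hpres := EuclideanSpace.volume_preserving_symm_measurableEquiv_toLp (Fin m ⊕ Fin k)
    have : volume T = volume (Set.univ.pi fun i : Fin m ⊕ Fin k => Icc (-(r i)) (r i) : Set (Fin m ⊕ Fin k → ℝ)) := by
      rw [← hpres.measure_preimage (MeasurableSet.univ_pi fun i => measurableSet_Icc).nullMeasurableSet]
      rfl
    rw [this, volume_pi_pi]
    have hIcc : ∀ i : Fin m ⊕ Fin k, volume (Icc (-(r i)) (r i)) = ENNReal.ofReal (2 * r i) := by
      intro i
      rw [Real.volume_Icc]
      congr 1
      ring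
    simp_rw [hIcc]
    rw [Fintype.prod_sum_type]
    have hr1 : ∀ i : Fin m, (2 : ℝ) * r (Sum.inl i) = 2 * (t * θ) := fun i => rfl
    have hr2 : ∀ j : Fin k, (2 : ℝ) * r (Sum.inr j) = 2 * t := fun j => rfl
    simp_rw [hr1, hr2, Finset.prod_const, Finset.card_univ, Fintype.card_fin]
    rw [← ENNReal.ofReal_pow (by positivity), ← ENNReal.ofReal_pow (by positivity),
      ← ENNReal.ofReal_mul (by positivity)]
    congr 1
    have : (2 * (t * θ)) ^ m * (2 * t) ^ k = 2 ^ (m + k) * θ ^ m * t ^ (m + k) := by ring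
    rw [this, hmk]
  calc volume {x : EuclideanSpace ℝ (Fin d) |
      t / 2 ≤ ‖x‖ ∧ ‖x‖ ≤ t ∧
      θ / 2 ≤ ‖(E.orthogonalProjection (‖x‖⁻¹ • x) : EuclideanSpace ℝ (Fin d))‖ ∧
      ‖(E.orthogonalProjection (‖x‖⁻¹ • x) : EuclideanSpace ℝ (Fin d))‖ ≤ θ}
      ≤ volume (B.repr ⁻¹' T) := measure_mono hsub
    _ = volume T := B.measurePreserving_repr.measure_preimage hTmeas.nullMeasurableSet
    _ = ENNReal.ofReal ((2 : ℝ) ^ d * θ ^ m * t ^ d) := hvolT
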